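/- Let n ≥ 2, 1 ≤ ℓ ≤ n−1, set m = n − ℓ, and let b_1,…,b_ℓ be positive integers. Let I ⊆ S = k[x_1,…,x_n] be the monomial ideal generated by x_1,…,x_{m−1} together with the monomials g_j = (∏_{s=1}^{j−1} x_{m+s−1}^{b_s})·x_{m+j−1}^{b_j+1} for 1 ≤ j ≤ ℓ−1 and g_ℓ = ∏_{s=1}^{ℓ} x_{m+s−1}^{b_s}. Then the pairs ((∏_{s=1}^{j−1} x_{m+s−1}^{b_s})·x_{m+j−1}^{i}, {m+j, m+j+1, …, n}) for j = 1,…,ℓ and i = 0,…,b_j − 1, ordered lexicographically by (j, i), form a Stanley filtration of S/I. -/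

import Mathlib

open MvPolynomial

open MvPolynomial

/-- `I` is a monomial ideal: it is generated by a set of monomials `x^u`. -/
def IsMonomialIdeal {k : Type} [Field k] {n : ℕ} (I : Ideal (MvPolynomial (Fin n) k)) : Prop :=
  ∃ G : Set (Fin n →₀ ℕ), I = Ideal.span ((fun u => (monomial u (1 : k))) '' G)

/-- The set of exponent vectors of monomials in the pair `(x^u, σ)`. -/
def stanleyPairSet {n : ℕ} (u : Fin n →₀ ℕ) (σ : Finset (Fin n)) : Set (Fin n →₀ ℕ) :=
  {w | ∃ v : Fin n →₀ ℕ, (∀ i, v i ≠ 0 → i ∈ σ) ∧ w = u + v}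

/-- A Stanley decomposition of `S/I`. -/
def IsStanleyDecomp {k : Type} [Field k] {n : ℕ} (I : Ideal (MvPolynomial (Fin n) k))
    (𝔖 : Finset ((Fin n →₀ ℕ) × Finset (Fin n))) : Prop :=
  (∀ p ∈ 𝔖, ∀ q ∈ 𝔖, p ≠ q → Disjoint (stanleyPairSet p.1 p.2) (stanleyPairSet q.1 q.2)) ∧
  (⋃ p ∈ (𝔖 : Set ((Fin n →₀ ℕ) × Finset (Fin n))), stanleyPairSet p.1 p.2)
      = {w | monomial w (1 : k) ∉ I}

/-- A Stanley filtration of `S/I`: an ordered Stanley decomposition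
`(x^{u_1},σ_1),…,(x^{u_m},σ_m)` such that for every `1 ≤ j ≤ m` the first `j` pairs form a
Stanley decomposition of `S/(I + ⟨x^{u_{j+1}},…,x^{u_m}⟩)`. -/
def IsStanleyFiltration {k : Type} [Field k] {n : ℕ} (I : Ideal (MvPolynomial (Fin n) k))
    (L : List ((Fin n →₀ ℕ) × Finset (Fin n))) : Prop :=
  IsStanleyDecomp I L.toFinset ∧
  ∀ j : ℕ, 1 ≤ j → j ≤ L.length →
    IsStanleyDecomp
      (I ⊔ Ideal.span ((fun p : (Fin n →₀ ℕ) × Finset (Fin n) => monomial p.1 (1 : k)) ''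
        {p | p ∈ L.drop j}))
      (L.take j).toFinset


/-- The exponent vector (0-based) of the monomial
`(∏_{s=0}^{j-1} x_{(m-1)+s}^{b s}) · x_{(m-1)+j}^{i}`, which in the 1-based notation of the
paper is `(∏_{s=1}^{j} x_{m+s-1}^{b_s}) · x_{m+j}^{i}`. -/
noncomputable def lexExp (n m : ℕ) (b : ℕ → ℕ) (j i : ℕ) : Fin n →₀ ℕ :=
  Finsupp.equivFunOnFinite.symm (fun t : Fin n =>
    if (t : ℕ) + 1 < m then 0
    else if (t : ℕ) < m - 1 + j then b ((t : ℕ) - (m - 1))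
    else if (t : ℕ) = m - 1 + j then i else 0)


namespace RSaux


def lexLt (a a' : ℕ × ℕ) : Prop := a.1 < a'.1 ∨ (a.1 = a'.1 ∧ a.2 < a'.2)

lemma lexLt_irrefl (a : ℕ × ℕ) : ¬ lexLt a a := by simp [lexLt]

lemma lexLt_asymm {a a' : ℕ × ℕ} (h : lexLt a a') (h' : lexLt a' a) : False := by
  rcases h with h | ⟨h, h2⟩ <;> rcases h' with h' | ⟨h', h2'⟩ <;> omega

def Lidx (ℓ : ℕ) (b : ℕ → ℕ) : List (ℕ × ℕ) :=
  (List.range ℓ).flatMap fun j => (List.range (b j)).map (Prod.mk j)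

lemma mem_Lidx {ℓ : ℕ} {b : ℕ → ℕ} {a : ℕ × ℕ} : a ∈ Lidx ℓ b ↔ a.1 < ℓ ∧ a.2 < b a.1 := by
  constructor
  · simp only [Lidx, List.mem_flatMap, List.mem_map, List.mem_range]
    rintro ⟨j, hj, i, hi, rfl⟩; exact ⟨hj, hi⟩
  · rintro ⟨h1, h2⟩
    simp only [Lidx, List.mem_flatMap, List.mem_map, List.mem_range]
    exact ⟨a.1, h1, a.2, h2, rfl⟩

lemma pairwise_Lidx (ℓ : ℕ) (b : ℕ → ℕ) : (Lidx ℓ b).Pairwise lexLt := by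
  induction ℓ with
  | zero => simp [Lidx]
  | succ l ih =>
    rw [Lidx, List.range_succ, List.flatMap_append, List.pairwise_append]
    refine ⟨ih, ?_, ?_⟩
    · simp only [List.flatMap_cons, List.flatMap_nil, List.append_nil]
      refine List.Pairwise.map _ (fun i i' h => Or.inr ⟨rfl, h⟩) (List.pairwise_lt_range (n := b l))
    · intro a ha a' ha'
      have h1 : a.1 < l := (mem_Lidx.mp ha).1
      simp only [List.flatMap_cons, List.flatMap_nil, List.append_nil, List.mem_map,
        List.mem_range] at ha'
      obtain ⟨i, _, rfl⟩ := ha'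
      exact Or.inl h1

lemma take_drop_char {ℓ : ℕ} {b : ℕ → ℕ} {r : ℕ} (hr : r < (Lidx ℓ b).length) :
    (∀ a, a ∈ (Lidx ℓ b).take r ↔ (a ∈ Lidx ℓ b ∧ lexLt a ((Lidx ℓ b)[r]))) ∧
    (∀ a, a ∈ (Lidx ℓ b).drop r ↔ (a ∈ Lidx ℓ b ∧ ¬ lexLt a ((Lidx ℓ b)[r]))) := by
  set L := Lidx ℓ b with hL
  set a0 := L[r] with ha0
  have hsplit : L = L.take r ++ L.drop r := (List.take_append_drop r L).symm
  have hpw : (L.take r ++ L.drop r).Pairwise lexLt := by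
    rw [← hsplit]; exact pairwise_Lidx ℓ b
  rw [List.pairwise_append] at hpw
  obtain ⟨hpt, hpd, hcross⟩ := hpw
  have hdrop : L.drop r = a0 :: L.drop (r + 1) := List.drop_eq_getElem_cons hr
  have ha0mem : a0 ∈ L.drop r := by rw [hdrop]; exact List.mem_cons_self
  have hheadlt : ∀ a ∈ L.drop r, a = a0 ∨ lexLt a0 a := by
    intro a ha; rw [hdrop] at ha
    rcases List.mem_cons.mp ha with h | h
    · exact Or.inl h
    · rw [hdrop] at hpd
      exact Or.inr ((List.pairwise_cons.mp hpd).1 a h)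
  have hmem : ∀ a, a ∈ L ↔ a ∈ L.take r ∨ a ∈ L.drop r := by
    intro a; conv_lhs => rw [hsplit]
    exact List.mem_append
  constructor
  · intro a
    constructor
    · intro h
      exact ⟨(hmem a).mpr (Or.inl h), hcross a h a0 ha0mem⟩
    · rintro ⟨haL, hlt⟩
      rcases (hmem a).mp haL with h | h
      · exact h
      · rcases hheadlt a h with rfl | h2
        · exact absurd hlt (lexLt_irrefl _)
        · exact absurd hlt (fun hl => lexLt_asymm hl h2)
  · intro a
    constructor
    · intro h
      refine ⟨(hmem a).mpr (Or.inr h), ?_⟩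
      rcases hheadlt a h with rfl | h2
      · exact lexLt_irrefl _
      · exact fun hl => lexLt_asymm hl h2
    · rintro ⟨haL, hnlt⟩
      rcases (hmem a).mp haL with h | h
      · exact absurd (hcross a h a0 ha0mem) hnlt
      · exact h



lemma equivFunOnFinite_symm_apply_toFun {α M : Type*} [Zero M] [Finite α] (f : α → M)
    (a : α) : (Finsupp.equivFunOnFinite.symm f) a = f a := rfl

variable {n m : ℕ} {b : ℕ → ℕ}

lemma lexExp_apply (n m : ℕ) (b : ℕ → ℕ) (j i : ℕ) (t : Fin n) :
    lexExp n m b j i t =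
      if (t : ℕ) + 1 < m then 0
      else if (t : ℕ) < m - 1 + j then b ((t : ℕ) - (m - 1))
      else if (t : ℕ) = m - 1 + j then i else 0 :=
  equivFunOnFinite_symm_apply_toFun _ _

lemma lexExp_lo {j i : ℕ} {t : Fin n} (h : (t : ℕ) + 1 < m) : lexExp n m b j i t = 0 := by
  rw [lexExp_apply, if_pos h]

lemma lexExp_mid {j i : ℕ} {t : Fin n} (h1 : m - 1 ≤ (t : ℕ)) (h2 : (t : ℕ) < m - 1 + j) :
    lexExp n m b j i t = b ((t : ℕ) - (m - 1)) := by
  rw [lexExp_apply, if_neg (by omega), if_pos h2]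

lemma lexExp_pivot {j i : ℕ} {t : Fin n} (h : (t : ℕ) = m - 1 + j) :
    lexExp n m b j i t = i := by
  rw [lexExp_apply, if_neg (by omega), if_neg (by omega), if_pos h]

lemma lexExp_hi {j i : ℕ} {t : Fin n} (h : m - 1 + j < (t : ℕ)) :
    lexExp n m b j i t = 0 := by
  rw [lexExp_apply, if_neg (by omega), if_neg (by omega), if_neg (by omega)]

lemma lexExp_le_lexExp {j j' i i' : ℕ} (hjj : j ≤ j') (h1 : j < j' → i ≤ b j)
    (h2 : j = j' → i ≤ i') : lexExp n m b j i ≤ lexExp n m b j' i' := by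
  rw [Finsupp.le_def]
  intro t
  by_cases hlo : (t : ℕ) + 1 < m
  · rw [lexExp_lo hlo]; exact Nat.zero_le _
  · rcases lt_trichotomy ((t : ℕ)) (m - 1 + j) with h | h | h
    · rw [lexExp_mid (by omega) h, lexExp_mid (by omega) (by omega)]
    · rw [lexExp_pivot h]
      rcases Nat.lt_or_ge j j' with hc | hc
      · rw [lexExp_mid (by omega) (by omega)]
        have : (t : ℕ) - (m - 1) = j := by omega
        rw [this]; exact h1 hc
      · have hje : j = j' := le_antisymm hjj hc
        rw [lexExp_pivot (by omega)]
        exact h2 hje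
    · rw [lexExp_hi h]; exact Nat.zero_le _

lemma mem_pairSet_iff (hm : 1 ≤ m) {j i : ℕ} {w : Fin n →₀ ℕ} :
    w ∈ stanleyPairSet (lexExp n m b j i)
        (Finset.univ.filter fun t : Fin n => m + j ≤ (t : ℕ)) ↔
    ∀ t : Fin n, (t : ℕ) ≤ m - 1 + j → w t = lexExp n m b j i t := by
  constructor
  · rintro ⟨v, hv, rfl⟩ t ht
    have hvz : v t = 0 := by
      by_contra hne
      have := hv t hne
      simp only [Finset.mem_filter, Finset.mem_univ, true_and] at this
      omega
    rw [Finsupp.add_apply, hvz, add_zero]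
  · intro h
    refine ⟨Finsupp.equivFunOnFinite.symm
      (fun t : Fin n => if (t : ℕ) ≤ m - 1 + j then 0 else w t), ?_, ?_⟩
    · intro t ht
      rw [equivFunOnFinite_symm_apply_toFun] at ht
      simp only [Finset.mem_filter, Finset.mem_univ, true_and]
      by_cases hc : (t : ℕ) ≤ m - 1 + j
      · rw [if_pos hc] at ht; exact absurd rfl ht
      · omega
    · ext t
      rw [Finsupp.add_apply, equivFunOnFinite_symm_apply_toFun]
      by_cases hc : (t : ℕ) ≤ m - 1 + j
      · rw [if_pos hc, add_zero, h t hc]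
      · rw [if_neg hc, lexExp_hi (by omega), zero_add]

lemma pairSets_disjoint_aux (hm : 1 ≤ m) {ℓ : ℕ} (hn : m + ℓ = n) {j i j' i' : ℕ}
    (hj' : j' < ℓ) (hi : i < b j) (hjj : j < j') {w : Fin n →₀ ℕ}
    (h : ∀ t : Fin n, (t : ℕ) ≤ m - 1 + j → w t = lexExp n m b j i t)
    (h' : ∀ t : Fin n, (t : ℕ) ≤ m - 1 + j' → w t = lexExp n m b j' i' t) : False := by
  have htn : m - 1 + j < n := by omega
  set t : Fin n := ⟨m - 1 + j, htn⟩ with hts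
  have e1 : w t = i := by rw [h t (le_refl _), lexExp_pivot rfl]
  have e2 : w t = b j := by
    rw [h' t (by show m - 1 + j ≤ m - 1 + j'; omega),
      lexExp_mid (by show m - 1 ≤ m - 1 + j; omega) (by show m - 1 + j < m - 1 + j'; omega)]
    congr 1
    show m - 1 + j - (m - 1) = j
    omega
  omega

lemma pairSets_disjoint (hm : 1 ≤ m) {ℓ : ℕ} (hn : m + ℓ = n) {j i j' i' : ℕ}
    (hj : j < ℓ) (hj' : j' < ℓ) (hi : i < b j) (hi' : i' < b j')
    (hne : (j, i) ≠ (j', i')) :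
    Disjoint (stanleyPairSet (lexExp n m b j i)
        (Finset.univ.filter fun t : Fin n => m + j ≤ (t : ℕ)))
      (stanleyPairSet (lexExp n m b j' i')
        (Finset.univ.filter fun t : Fin n => m + j' ≤ (t : ℕ))) := by
  rw [Set.disjoint_left]
  intro w hw hw'
  rw [mem_pairSet_iff hm] at hw hw'
  rcases lt_trichotomy j j' with hc | hc | hc
  · exact pairSets_disjoint_aux hm hn hj' hi hc hw hw'
  · subst hc
    have hie : i = i' := by
      have htn : m - 1 + j < n := by omega
      have e1 := hw ⟨m - 1 + j, htn⟩ (le_refl _)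
      have e2 := hw' ⟨m - 1 + j, htn⟩ (le_refl _)
      rw [lexExp_pivot rfl] at e1 e2
      omega
    exact hne (by rw [hie])
  · exact pairSets_disjoint_aux hm hn hj hi' hc hw' hw

def Gset (n m : ℕ) (b : ℕ → ℕ) (j0 i0 : ℕ) : Set (Fin n →₀ ℕ) :=
  {u | ∃ t : Fin n, (t : ℕ) + 1 < m ∧ u = Finsupp.single t 1} ∪
  {u | ∃ j : ℕ, j < j0 ∧ u = lexExp n m b j (b j + 1)} ∪
  {lexExp n m b j0 i0}

lemma monomial_mem_span_iff {k : Type} [Field k] {n : ℕ} {G : Set (Fin n →₀ ℕ)}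
    {w : Fin n →₀ ℕ} :
    monomial w (1 : k) ∈ Ideal.span ((fun u => monomial u (1 : k)) '' G) ↔ ∃ u ∈ G, u ≤ w := by
  rw [mem_ideal_span_monomial_image]
  simp [MvPolynomial.support_monomial, (one_ne_zero : (1 : k) ≠ 0)]

lemma std_iff {n m ℓ : ℕ} {b : ℕ → ℕ} (hm : 1 ≤ m) (hn : m + ℓ = n)
    {j0 i0 : ℕ} (hj0 : j0 < ℓ) {w : Fin n →₀ ℕ} :
    (¬ ∃ u ∈ Gset n m b j0 i0, u ≤ w) ↔
    ∃ j i, ((j < j0 ∧ i < b j) ∨ (j = j0 ∧ i < i0)) ∧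
      w ∈ stanleyPairSet (lexExp n m b j i)
        (Finset.univ.filter fun t : Fin n => m + j ≤ (t : ℕ)) := by
  constructor
  · intro h
    push_neg at h
    -- w vanishes on the low coordinates
    have hzero : ∀ t : Fin n, (t : ℕ) + 1 < m → w t = 0 := by
      intro t ht
      have := h (Finsupp.single t 1) (Or.inl (Or.inl ⟨t, ht, rfl⟩))
      rw [Finsupp.single_le_iff] at this
      omega
    set W : ℕ → ℕ := fun s => if hs : m - 1 + s < n then w ⟨m - 1 + s, hs⟩ else 0 with hW
    have hWval : ∀ s, (hs : m - 1 + s < n) → W s = w ⟨m - 1 + s, hs⟩ := by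
      intro s hs; rw [hW]; simp only [dif_pos hs]
    -- the first failure exists
    have hA : ∃ s, s ≤ j0 ∧ W s < (if s < j0 then b s else i0) := by
      by_contra hA
      push_neg at hA
      apply h (lexExp n m b j0 i0) (Or.inr rfl)
      rw [Finsupp.le_def]
      intro t
      by_cases hlo : (t : ℕ) + 1 < m
      · rw [lexExp_lo hlo]; exact Nat.zero_le _
      · rcases lt_trichotomy ((t : ℕ)) (m - 1 + j0) with hc | hc | hc
        · rw [lexExp_mid (by omega) hc]
          set s := (t : ℕ) - (m - 1) with hs
          have hsj : s < j0 := by omega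
          have hsn : m - 1 + s < n := by omega
          have := hA s (le_of_lt hsj)
          rw [if_pos hsj, hWval s hsn] at this
          have heq : (⟨m - 1 + s, hsn⟩ : Fin n) = t := by
            apply Fin.ext; simp; omega
          rw [heq] at this
          exact this
        · rw [lexExp_pivot hc]
          have hsn : m - 1 + j0 < n := by omega
          have := hA j0 (le_refl _)
          rw [if_neg (lt_irrefl _), hWval j0 hsn] at this
          have heq : (⟨m - 1 + j0, hsn⟩ : Fin n) = t := by
            apply Fin.ext; simp; omega
          rw [heq] at this
          exact this
        · rw [lexExp_hi hc]; exact Nat.zero_le _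
    set j := Nat.find hA with hj
    obtain ⟨hjle, hjlt⟩ := Nat.find_spec hA
    have hge : ∀ s, s < j → b s ≤ W s := by
      intro s hs
      have hmin := Nat.find_min hA hs
      push_neg at hmin
      have hsj0 : s ≤ j0 := by omega
      have := hmin hsj0
      rw [if_pos (by omega : s < j0)] at this
      exact this
    have heq : ∀ s, s < j → W s = b s := by
      intro s hs
      by_contra hne
      have hgt : b s + 1 ≤ W s := by have := hge s hs; omega
      apply h (lexExp n m b s (b s + 1)) (Or.inl (Or.inr ⟨s, by omega, rfl⟩))
      rw [Finsupp.le_def]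
      intro t
      by_cases hlo : (t : ℕ) + 1 < m
      · rw [lexExp_lo hlo]; exact Nat.zero_le _
      · rcases lt_trichotomy ((t : ℕ)) (m - 1 + s) with hc | hc | hc
        · rw [lexExp_mid (by omega) hc]
          set s' := (t : ℕ) - (m - 1) with hs'
          have hs'n : m - 1 + s' < n := by omega
          have := hge s' (by omega)
          rw [hWval s' hs'n] at this
          have heqt : (⟨m - 1 + s', hs'n⟩ : Fin n) = t := by
            apply Fin.ext; simp; omega
          rw [heqt] at this
          exact this
        · rw [lexExp_pivot hc]
          have hsn : m - 1 + s < n := by omega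
          rw [hWval s hsn] at hgt
          have heqt : (⟨m - 1 + s, hsn⟩ : Fin n) = t := by
            apply Fin.ext; simp; omega
          rw [heqt] at hgt
          exact hgt
        · rw [lexExp_hi hc]; exact Nat.zero_le _
    refine ⟨j, W j, ?_, ?_⟩
    · rcases Nat.lt_or_ge j j0 with hc | hc
      · left; refine ⟨hc, ?_⟩; rwa [if_pos hc] at hjlt
      · right
        refine ⟨le_antisymm hjle hc, ?_⟩
        rwa [if_neg (by omega : ¬ j < j0)] at hjlt
    · rw [mem_pairSet_iff hm]
      intro t ht
      by_cases hlo : (t : ℕ) + 1 < m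
      · rw [lexExp_lo hlo, hzero t hlo]
      · rcases lt_trichotomy ((t : ℕ)) (m - 1 + j) with hc | hc | hc
        · rw [lexExp_mid (by omega) hc]
          set s := (t : ℕ) - (m - 1) with hs
          have hsn : m - 1 + s < n := by omega
          have := heq s (by omega)
          rw [hWval s hsn] at this
          have heqt : (⟨m - 1 + s, hsn⟩ : Fin n) = t := by
            apply Fin.ext; simp; omega
          rw [heqt] at this
          exact this
        · rw [lexExp_pivot hc]
          have hsn : m - 1 + j < n := by omega
          rw [hWval j hsn]
          have heqt : (⟨m - 1 + j, hsn⟩ : Fin n) = t := by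
            apply Fin.ext; simp; omega
          rw [heqt]
        · omega
  · rintro ⟨j, i, hP, hw⟩ ⟨u, hu, hle⟩
    have hjj0 : j ≤ j0 := by rcases hP with ⟨h1, _⟩ | ⟨h1, _⟩ <;> omega
    have hjℓ : j < ℓ := by omega
    rw [mem_pairSet_iff hm] at hw
    rw [Finsupp.le_def] at hle
    rcases hu with (⟨t, htm, rfl⟩ | ⟨j', hj', rfl⟩) | rfl
    · -- u = single t 1
      have h1 := hle t
      rw [Finsupp.single_apply, if_pos rfl] at h1
      have h2 : w t = 0 := by
        rw [hw t (by omega), lexExp_lo htm]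
      omega
    · -- u = lexExp j' (b j' + 1), j' < j0
      rcases Nat.lt_or_ge j j' with hc | hc
      · -- j < j'
        have hiv : i < b j := by
          rcases hP with ⟨_, h2⟩ | ⟨h1, _⟩
          · exact h2
          · omega
        have htn : m - 1 + j < n := by omega
        have h1 := hle ⟨m - 1 + j, htn⟩
        rw [lexExp_mid (by show m - 1 ≤ m - 1 + j; omega)
          (by show m - 1 + j < m - 1 + j'; omega)] at h1
        have hred : (m - 1 + j) - (m - 1) = j := by omega
        rw [show ((⟨m - 1 + j, htn⟩ : Fin n) : ℕ) = m - 1 + j from rfl, hred] at h1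
        have h2 : w ⟨m - 1 + j, htn⟩ = i := by
          rw [hw ⟨m - 1 + j, htn⟩ (le_refl _), lexExp_pivot rfl]
        omega
      · -- j' ≤ j
        have htn : m - 1 + j' < n := by omega
        have h1 := hle ⟨m - 1 + j', htn⟩
        rw [lexExp_pivot rfl] at h1
        rcases Nat.lt_or_ge j' j with hc2 | hc2
        · have h2 : w ⟨m - 1 + j', htn⟩ = b j' := by
            rw [hw ⟨m - 1 + j', htn⟩ (by show m - 1 + j' ≤ m - 1 + j; omega),
              lexExp_mid (by show m - 1 ≤ m - 1 + j'; omega)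
                (by show m - 1 + j' < m - 1 + j; omega)]
            congr 1
            show m - 1 + j' - (m - 1) = j'
            omega
          omega
        · have hje : j = j' := by omega
          subst hje
          have h2 : w ⟨m - 1 + j, htn⟩ = i := by
            rw [hw ⟨m - 1 + j, htn⟩ (le_refl _), lexExp_pivot rfl]
          have hib : i ≤ b j := by
            rcases hP with ⟨_, h3⟩ | ⟨h3, _⟩ <;> omega
          omega
    · -- u = lexExp j0 i0
      rcases Nat.lt_or_ge j j0 with hc | hc
      · have hiv : i < b j := by
          rcases hP with ⟨_, h2⟩ | ⟨h1, _⟩ <;> omega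
        have htn : m - 1 + j < n := by omega
        have h1 := hle ⟨m - 1 + j, htn⟩
        rw [lexExp_mid (by show m - 1 ≤ m - 1 + j; omega)
          (by show m - 1 + j < m - 1 + j0; omega)] at h1
        have hred : (m - 1 + j) - (m - 1) = j := by omega
        rw [show ((⟨m - 1 + j, htn⟩ : Fin n) : ℕ) = m - 1 + j from rfl, hred] at h1
        have h2 : w ⟨m - 1 + j, htn⟩ = i := by
          rw [hw ⟨m - 1 + j, htn⟩ (le_refl _), lexExp_pivot rfl]
        omega
      · have hje : j = j0 := by omega
        subst hje
        have hii0 : i < i0 := by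
          rcases hP with ⟨h1, _⟩ | ⟨_, h2⟩ <;> omega
        have htn : m - 1 + j < n := by omega
        have h1 := hle ⟨m - 1 + j, htn⟩
        rw [lexExp_pivot rfl] at h1
        have h2 : w ⟨m - 1 + j, htn⟩ = i := by
          rw [hw ⟨m - 1 + j, htn⟩ (le_refl _), lexExp_pivot rfl]
        omega
noncomputable def Fpair (n m : ℕ) (b : ℕ → ℕ) (a : ℕ × ℕ) :
    (Fin n →₀ ℕ) × Finset (Fin n) :=
  (lexExp n m b a.1 a.2, Finset.univ.filter fun t : Fin n => m + a.1 ≤ (t : ℕ))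

lemma master {k : Type} [Field k] {n m ℓ : ℕ} {b : ℕ → ℕ} (hm : 1 ≤ m) (hn : m + ℓ = n)
    {j0 i0 : ℕ} (hj0 : j0 < ℓ) (hi0 : i0 ≤ b j0)
    (𝔖 : Finset ((Fin n →₀ ℕ) × Finset (Fin n)))
    (h𝔖 : ∀ q, q ∈ 𝔖 ↔ ∃ j i, ((j < j0 ∧ i < b j) ∨ (j = j0 ∧ i < i0)) ∧
      q = Fpair n m b (j, i)) :
    IsStanleyDecomp (Ideal.span ((fun u => monomial u (1 : k)) '' Gset n m b j0 i0)) 𝔖 := by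
  have hval : ∀ j i, ((j < j0 ∧ i < b j) ∨ (j = j0 ∧ i < i0)) → j < ℓ ∧ i < b j := by
    intro j i hP
    rcases hP with ⟨h1, h2⟩ | ⟨h1, h2⟩
    · exact ⟨by omega, h2⟩
    · subst h1; exact ⟨hj0, by omega⟩
  constructor
  · intro p hp q hq hne
    obtain ⟨j, i, hP, rfl⟩ := (h𝔖 p).mp hp
    obtain ⟨j', i', hP', rfl⟩ := (h𝔖 q).mp hq
    obtain ⟨hjl, hib⟩ := hval j i hP
    obtain ⟨hjl', hib'⟩ := hval j' i' hP'
    have hne2 : (j, i) ≠ (j', i') := by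
      rintro h
      exact hne (by rw [h])
    exact pairSets_disjoint hm hn hjl hjl' hib hib' hne2
  · ext w
    simp only [Set.mem_iUnion, Set.mem_setOf_eq, Finset.mem_coe, exists_prop]
    rw [monomial_mem_span_iff]
    constructor
    · rintro ⟨p, hp, hwp⟩
      obtain ⟨j, i, hP, rfl⟩ := (h𝔖 p).mp hp
      exact (std_iff hm hn hj0).mpr ⟨j, i, hP, hwp⟩
    · intro h
      obtain ⟨j, i, hP, hw⟩ := (std_iff hm hn hj0).mp h
      exact ⟨Fpair n m b (j, i), (h𝔖 _).mpr ⟨j, i, hP, rfl⟩, hw⟩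
end RSaux


/-- for the saturated lexicographic ideal
`I = ⟨x_1,…,x_{m−1}, g_1,…,g_ℓ⟩` of Reeves–Stillman (with `m = n − ℓ`,
`g_j = (∏_{s=1}^{j−1} x_{m+s−1}^{b_s})·x_{m+j−1}^{b_j+1}` for `j < ℓ` and
`g_ℓ = ∏_{s=1}^{ℓ} x_{m+s−1}^{b_s}`), the pairs
`((∏_{s=1}^{j−1} x_{m+s−1}^{b_s})·x_{m+j−1}^{i}, {m+j,…,n})`, for `j = 1,…,ℓ` and
`i = 0,…,b_j−1`, ordered lexicographically by `(j,i)`, form a Stanley filtration of `S/I`.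
Everything is stated with 0-based indices: variables are `x_0,…,x_{n−1}` and `b`, `j` are
0-based, so e.g. the 1-based variable `x_{m+s−1}` is the 0-based variable `x_{(m−1)+s}`. -/
theorem reeves_stillman_stanley_filtration {k : Type} [Field k] {n ℓ m : ℕ}
    (hn : 2 ≤ n) (hℓ1 : 1 ≤ ℓ) (hℓ2 : ℓ ≤ n - 1) (hm : m = n - ℓ)
    (b : ℕ → ℕ) (hb : ∀ s < ℓ, 1 ≤ b s)
    (I : Ideal (MvPolynomial (Fin n) k))
    (hI : I = Ideal.span
      ({f | ∃ t : Fin n, (t : ℕ) + 1 < m ∧ f = X t} ∪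
       {f | ∃ j : ℕ, j + 1 < ℓ ∧ f = monomial (lexExp n m b j (b j + 1)) (1 : k)} ∪
       {monomial (lexExp n m b (ℓ - 1) (b (ℓ - 1))) (1 : k)})) :
    IsStanleyFiltration I
      ((List.range ℓ).flatMap fun j => (List.range (b j)).map fun i =>
        (lexExp n m b j i, Finset.univ.filter fun t : Fin n => m + j ≤ (t : ℕ))) := by
  have hm1 : 1 ≤ m := by omega
  have hmn : m + ℓ = n := by omega
  set L : List ((Fin n →₀ ℕ) × Finset (Fin n)) :=
    (List.range ℓ).flatMap (fun j => (List.range (b j)).map fun i =>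
      (lexExp n m b j i, Finset.univ.filter fun t : Fin n => m + j ≤ (t : ℕ))) with hLdef
  have hLmap : L = (RSaux.Lidx ℓ b).map (RSaux.Fpair n m b) := by
    rw [hLdef, RSaux.Lidx, List.map_flatMap]
    simp only [List.map_map]
    rfl
  have hIG : I = Ideal.span
      ((fun u => monomial u (1 : k)) '' RSaux.Gset n m b (ℓ - 1) (b (ℓ - 1))) := by
    rw [hI]
    congr 1
    ext f
    simp only [RSaux.Gset, Set.image_union, Set.image_singleton, Set.mem_union,
      Set.mem_setOf_eq, Set.mem_singleton_iff, Set.mem_image]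
    constructor
    · rintro ((⟨t, ht, rfl⟩ | ⟨j, hj, rfl⟩) | rfl)
      · exact Or.inl (Or.inl ⟨Finsupp.single t 1, ⟨t, ht, rfl⟩, rfl⟩)
      · exact Or.inl (Or.inr ⟨lexExp n m b j (b j + 1), ⟨j, by omega, rfl⟩, rfl⟩)
      · exact Or.inr rfl
    · rintro ((⟨u, ⟨t, ht, rfl⟩, rfl⟩ | ⟨u, ⟨j, hj, rfl⟩, rfl⟩) | rfl)
      · exact Or.inl (Or.inl ⟨t, ht, rfl⟩)
      · exact Or.inl (Or.inr ⟨j, by omega, rfl⟩)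
      · exact Or.inr rfl
  have hbase : IsStanleyDecomp I L.toFinset := by
    rw [hIG]
    apply RSaux.master hm1 hmn (by omega : ℓ - 1 < ℓ) (le_refl (b (ℓ - 1)))
    intro q
    rw [List.mem_toFinset, hLmap, List.mem_map]
    constructor
    · rintro ⟨a, haL, rfl⟩
      obtain ⟨h1, h2⟩ := RSaux.mem_Lidx.mp haL
      refine ⟨a.1, a.2, ?_, by rw [Prod.mk.eta]⟩
      rcases Nat.lt_or_ge a.1 (ℓ - 1) with hc | hc
      · exact Or.inl ⟨hc, h2⟩
      · have he : a.1 = ℓ - 1 := by omega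
        exact Or.inr ⟨he, by rw [← he]; exact h2⟩
    · rintro ⟨j, i, hP, rfl⟩
      refine ⟨(j, i), RSaux.mem_Lidx.mpr ?_, rfl⟩
      rcases hP with ⟨h1, h2⟩ | ⟨h1, h2⟩
      · exact ⟨by omega, h2⟩
      · exact ⟨by omega, by rw [h1]; exact h2⟩
  constructor
  · exact hbase
  · intro r hr1 hr2
    rcases eq_or_lt_of_le hr2 with he | hlt
    · subst he
      rw [List.drop_length, List.take_length]
      have hempty : {p : (Fin n →₀ ℕ) × Finset (Fin n) |
          p ∈ ([] : List ((Fin n →₀ ℕ) × Finset (Fin n)))} = ∅ := by simp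
      rw [hempty, Set.image_empty, Ideal.span_empty, sup_bot_eq]
      exact hbase
    · have hlen : L.length = (RSaux.Lidx ℓ b).length := by rw [hLmap, List.length_map]
      have hrl : r < (RSaux.Lidx ℓ b).length := by omega
      obtain ⟨htake, hdrop⟩ := RSaux.take_drop_char hrl
      set a0 := (RSaux.Lidx ℓ b)[r] with ha0def
      have ha0 : a0.1 < ℓ ∧ a0.2 < b a0.1 := RSaux.mem_Lidx.mp (List.getElem_mem hrl)
      have htakeL : L.take r = ((RSaux.Lidx ℓ b).take r).map (RSaux.Fpair n m b) := by
        rw [hLmap, List.map_take]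
      have hdropL : L.drop r = ((RSaux.Lidx ℓ b).drop r).map (RSaux.Fpair n m b) := by
        rw [hLmap, List.map_drop]
      have hJ : I ⊔ Ideal.span ((fun p : (Fin n →₀ ℕ) × Finset (Fin n) =>
            monomial p.1 (1 : k)) '' {p | p ∈ L.drop r}) =
          Ideal.span ((fun u => monomial u (1 : k)) '' RSaux.Gset n m b a0.1 a0.2) := by
        apply le_antisymm
        · apply sup_le
          · rw [hIG, Ideal.span_le]
            rintro f ⟨u, hu, rfl⟩
            rw [SetLike.mem_coe]
            rcases hu with (⟨t, ht, rfl⟩ | ⟨j, hj, rfl⟩) | rfl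
            · exact RSaux.monomial_mem_span_iff.mpr
                ⟨Finsupp.single t 1, Or.inl (Or.inl ⟨t, ht, rfl⟩), le_refl _⟩
            · rcases Nat.lt_or_ge j a0.1 with hc | hc
              · exact RSaux.monomial_mem_span_iff.mpr
                  ⟨lexExp n m b j (b j + 1), Or.inl (Or.inr ⟨j, hc, rfl⟩), le_refl _⟩
              · refine RSaux.monomial_mem_span_iff.mpr
                  ⟨lexExp n m b a0.1 a0.2, Or.inr rfl,
                    RSaux.lexExp_le_lexExp hc (fun _ => le_of_lt ha0.2) ?_⟩
                intro he
                rw [← he]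
                omega
            · refine RSaux.monomial_mem_span_iff.mpr
                ⟨lexExp n m b a0.1 a0.2, Or.inr rfl,
                  RSaux.lexExp_le_lexExp (by omega) (fun _ => le_of_lt ha0.2) ?_⟩
              intro he
              rw [← he]
              omega
          · rw [Ideal.span_le]
            rintro f ⟨q, hq, rfl⟩
            rw [SetLike.mem_coe]
            simp only [Set.mem_setOf_eq] at hq
            rw [hdropL, List.mem_map] at hq
            obtain ⟨a, haD, rfl⟩ := hq
            obtain ⟨haL, hnlt⟩ := (hdrop a).mp haD
            have h1 : a0.1 ≤ a.1 := by
              by_contra hcon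
              exact hnlt (Or.inl (by omega))
            refine RSaux.monomial_mem_span_iff.mpr ⟨lexExp n m b a0.1 a0.2, Or.inr rfl, ?_⟩
            show lexExp n m b a0.1 a0.2 ≤ lexExp n m b a.1 a.2
            refine RSaux.lexExp_le_lexExp h1 (fun _ => le_of_lt ha0.2) ?_
            intro he
            by_contra hcon
            exact hnlt (Or.inr ⟨he.symm, by omega⟩)
        · rw [Ideal.span_le]
          rintro f ⟨u, hu, rfl⟩
          rw [SetLike.mem_coe]
          rcases hu with (⟨t, ht, rfl⟩ | ⟨j, hj, rfl⟩) | rfl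
          · apply Ideal.mem_sup_left
            rw [hIG]
            exact Ideal.subset_span ⟨Finsupp.single t 1, Or.inl (Or.inl ⟨t, ht, rfl⟩), rfl⟩
          · apply Ideal.mem_sup_left
            rw [hIG]
            exact Ideal.subset_span
              ⟨lexExp n m b j (b j + 1), Or.inl (Or.inr ⟨j, by omega, rfl⟩), rfl⟩
          · apply Ideal.mem_sup_right
            apply Ideal.subset_span
            refine ⟨RSaux.Fpair n m b a0, ?_, rfl⟩
            simp only [Set.mem_setOf_eq]
            rw [hdropL, List.mem_map]
            exact ⟨a0, (hdrop a0).mpr ⟨RSaux.mem_Lidx.mpr ha0, RSaux.lexLt_irrefl a0⟩, rfl⟩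
      rw [hJ]
      apply RSaux.master hm1 hmn ha0.1 (le_of_lt ha0.2)
      intro q
      rw [List.mem_toFinset, htakeL, List.mem_map]
      constructor
      · rintro ⟨a, haT, rfl⟩
        obtain ⟨haL, hlt⟩ := (htake a).mp haT
        obtain ⟨h1, h2⟩ := RSaux.mem_Lidx.mp haL
        refine ⟨a.1, a.2, ?_, by rw [Prod.mk.eta]⟩
        rcases hlt with hc | ⟨hc1, hc2⟩
        · exact Or.inl ⟨hc, h2⟩
        · exact Or.inr ⟨hc1, hc2⟩
      · rintro ⟨j, i, hP, rfl⟩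
        refine ⟨(j, i), (htake (j, i)).mpr ⟨RSaux.mem_Lidx.mpr ?_, ?_⟩, rfl⟩
        · rcases hP with ⟨hc1, hc2⟩ | ⟨hc1, hc2⟩
          · exact ⟨by omega, hc2⟩
          · refine ⟨by omega, ?_⟩
            show i < b j
            rw [hc1]
            omega
        · rcases hP with ⟨hc1, hc2⟩ | ⟨hc1, hc2⟩
          · exact Or.inl hc1
          · exact Or.inr ⟨hc1, hc2⟩
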